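/- The map sending a heterogeneous out-tree (par, σ) to its heterogeneous dependency matrix D(par, σ) is injective: if two heterogeneous out-trees (par₁, σ₁) and (par₂, σ₂) with N non-root nodes satisfy D(par₁, σ₁) = D(par₂, σ₂), then par₁ = par₂ and σ₁ = σ₂. -/
import Mathlib


/-- Iterate the parent function `k` times starting from node `i`. -/
def parIter {N : ℕ} (par : Fin N → Option (Fin N)) : ℕ → Fin N → Option (Fin N)
  | 0, i => some i
  | k + 1, i => (par i).bind (parIter par k)

/-- `a` is an ancestor of `i`: `a` is reached from `i` by iterating `par` at least once. -/
def IsAncestor {N : ℕ} (par : Fin N → Option (Fin N)) (a i : Fin N) : Prop :=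
  ∃ k : ℕ, 0 < k ∧ parIter par k i = some a

/-- `par` is a well-founded parent function. -/
def WFParent {N : ℕ} (par : Fin N → Option (Fin N)) : Prop :=
  WellFounded (fun a i : Fin N => par i = some a)

open Classical in
/-- The heterogeneous dependency matrix of the heterogeneous out-tree `(par, σ)`:
`D i j = 1` iff `σ⁻¹ j` equals `i` or is an ancestor of `i`. -/
noncomputable def depMatrix {N : ℕ} (par : Fin N → Option (Fin N)) (σ : Equiv.Perm (Fin N)) :
    Fin N → Fin N → Bool :=
  fun i j => decide (σ.symm j = i ∨ IsAncestor par (σ.symm j) i)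

/-- The depth of node `i`: the least `k ≥ 1` with `parIter par k i = none`. -/
noncomputable def treeDepth {N : ℕ} (par : Fin N → Option (Fin N)) (i : Fin N) : ℕ :=
  sInf {k : ℕ | 1 ≤ k ∧ parIter par k i = none}

/-- Node `i` is a leaf: no node has `i` as its parent. -/
def IsLeaf {N : ℕ} (par : Fin N → Option (Fin N)) (i : Fin N) : Prop :=
  ∀ x, par x ≠ some i

/-- Tree dilation `di^{i→j}`: replace `par i` by `some j`. -/
def treeDilate {N : ℕ} (par : Fin N → Option (Fin N)) (i j : Fin N) :
    Fin N → Option (Fin N) :=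
  Function.update par i (some j)

/-- Tree absorption `ab^{j→i}`: replace `par i` by `none`. -/
def treeAbsorb {N : ℕ} (par : Fin N → Option (Fin N)) (i : Fin N) :
    Fin N → Option (Fin N) :=
  Function.update par i none

/-- Applicability of tree dilation `di^{i→j}`. -/
def DilateOK {N : ℕ} (par : Fin N → Option (Fin N)) (i j : Fin N) : Prop :=
  par i = none ∧ j ≠ i ∧ ¬ IsAncestor par i j

/-- Applicability of tree absorption `ab^{j→i}`. -/
def AbsorbOK {N : ℕ} (par : Fin N → Option (Fin N)) (i j : Fin N) : Prop :=
  IsLeaf par i ∧ par i = some j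

/-- Number of ones in a binary row. -/
def onesCount {N : ℕ} (r : Fin N → Bool) : ℕ :=
  (Finset.univ.filter fun c => r c = true).card

/-- Entrywise XOR of two rows. -/
def rowXor {N : ℕ} (r s : Fin N → Bool) : Fin N → Bool :=
  fun c => xor (r c) (s c)

/-- Replace row `i` of `S` by the XOR of rows `i` and `j`. -/
def matUpdateXor {K N : ℕ} (S : Fin K → Fin N → Bool) (i j : Fin K) :
    Fin K → Fin N → Bool :=
  Function.update S i (rowXor (S i) (S j))

/-- Applicability of matrix absorption `ab^{j→i}`. -/
def MatAbsorbOK {K N : ℕ} (S : Fin K → Fin N → Bool) (i j : Fin K) : Prop :=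
  onesCount (rowXor (S i) (S j)) = 1 ∧ onesCount (S j) < onesCount (S i)

/-- Applicability of matrix dilation `di^{i→j}`. -/
def MatDilateOK {K N : ℕ} (S : Fin K → Fin N → Bool) (i j : Fin K) : Prop :=
  onesCount (S i) = 1 ∧ ∀ c, ¬ (S i c = true ∧ S j c = true)

/-- A permutation matrix: exactly one `1` in each row and each column. -/
def IsPermMatrix {N : ℕ} (S : Fin N → Fin N → Bool) : Prop :=
  (∀ i, ∃! j, S i j = true) ∧ (∀ j, ∃! i, S i j = true)

/-- Column set `S_c` of column `c`. -/
def colSet {K N : ℕ} (D : Fin K → Fin N → Bool) (c : Fin N) : Set (Fin K) :=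
  {r | D r c = true}

/-- Unique element set `J_{S_c}`: `S_c` minus the union of all column sets that are
proper subsets of `S_c`. -/
def JSet {K N : ℕ} (D : Fin K → Fin N → Bool) (c : Fin N) : Set (Fin K) :=
  {r | r ∈ colSet D c ∧ ∀ c' : Fin N, colSet D c' ⊂ colSet D c → r ∉ colSet D c'}

/-- `1°`: no row is all-zero. -/
def Cond1 {K N : ℕ} (D : Fin K → Fin N → Bool) : Prop :=
  ∀ r, ∃ c, D r c = true

/-- `2°`: no column is all-zero. -/
def Cond2 {K N : ℕ} (D : Fin K → Fin N → Bool) : Prop :=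
  ∀ c, ∃ r, D r c = true

/-- `3°`: no two distinct rows are equal. -/
def Cond3 {K N : ℕ} (D : Fin K → Fin N → Bool) : Prop :=
  ∀ r₁ r₂, (∀ c, D r₁ c = D r₂ c) → r₁ = r₂

/-- `4°`: no two distinct columns are equal. -/
def Cond4 {K N : ℕ} (D : Fin K → Fin N → Bool) : Prop :=
  ∀ c₁ c₂, (∀ r, D r c₁ = D r c₂) → c₁ = c₂

/-- `5°`: any two column sets are nested or disjoint. -/
def Cond5 {K N : ℕ} (D : Fin K → Fin N → Bool) : Prop :=
  ∀ c₁ c₂, colSet D c₁ ⊆ colSet D c₂ ∨ colSet D c₂ ⊆ colSet D c₁ ∨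
    colSet D c₁ ∩ colSet D c₂ = ∅

/-- `6°`: every unique element set has exactly one element. -/
def Cond6 {K N : ℕ} (D : Fin K → Fin N → Bool) : Prop :=
  ∀ c, ∃! r, r ∈ JSet D c

/-- Condition set `P = {1°, 2°, 3°, 4°, 5°}`. -/
def CondP {K N : ℕ} (D : Fin K → Fin N → Bool) : Prop :=
  Cond1 D ∧ Cond2 D ∧ Cond3 D ∧ Cond4 D ∧ Cond5 D

/-- Condition set `P⁻ = {1°, 3°, 5°}`. -/
def CondPminus {K N : ℕ} (D : Fin K → Fin N → Bool) : Prop :=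
  Cond1 D ∧ Cond3 D ∧ Cond5 D

/-- One step of matrix absorption or matrix dilation. -/
def MatStep {N : ℕ} (S T : Fin N → Fin N → Bool) : Prop :=
  ∃ i j, (MatAbsorbOK S i j ∨ MatDilateOK S i j) ∧ T = matUpdateXor S i j


section AuxLemmas
variable {N : ℕ}

lemma parIter_add (par : Fin N → Option (Fin N)) (k l : ℕ) (i : Fin N) :
    parIter par (k + l) i = (parIter par k i).bind (parIter par l) := by
  induction k generalizing i with
  | zero => simp [parIter]
  | succ k ih =>
      have h : k + 1 + l = (k + l) + 1 := by omega
      rw [h]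
      cases hp : par i with
      | none => simp [parIter, hp]
      | some b => simp [parIter, hp, ih]

lemma isAncestor_trans {par : Fin N → Option (Fin N)} {a b c : Fin N}
    (hab : IsAncestor par a b) (hbc : IsAncestor par b c) : IsAncestor par a c := by
  obtain ⟨l, hl, hla⟩ := hab
  obtain ⟨k, hk, hkb⟩ := hbc
  exact ⟨k + l, by omega, by rw [parIter_add]; simp [hkb, hla]⟩

lemma not_isAncestor_self {par : Fin N → Option (Fin N)} (h : WFParent par) (a : Fin N) :
    ¬ IsAncestor par a a := by
  induction a using h.induction with
  | _ a ih =>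
    rintro ⟨k, hk, hiter⟩
    obtain ⟨m, rfl⟩ : ∃ m, k = m + 1 := ⟨k - 1, by omega⟩
    cases hp : par a with
    | none => simp [parIter, hp] at hiter
    | some b =>
        have hb : parIter par m b = some a := by simpa [parIter, hp] using hiter
        refine ih b hp ⟨m + 1, by omega, ?_⟩
        rw [parIter_add]
        simp [hb, parIter, hp]

lemma parent_anc {par : Fin N → Option (Fin N)} {i p : Fin N} (hp : par i = some p) :
    IsAncestor par p i := ⟨1, one_pos, by simp [parIter, hp]⟩

lemma anc_iff_of_parent {par : Fin N → Option (Fin N)} {i p : Fin N} (hp : par i = some p)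
    (a : Fin N) : IsAncestor par a i ↔ a = p ∨ IsAncestor par a p := by
  constructor
  · rintro ⟨k, hk, hiter⟩
    obtain ⟨m, rfl⟩ : ∃ m, k = m + 1 := ⟨k - 1, by omega⟩
    have hb : parIter par m p = some a := by simpa [parIter, hp] using hiter
    cases m with
    | zero =>
        left
        have : some p = some a := by simpa [parIter] using hb
        exact (Option.some_inj.mp this).symm
    | succ m => exact Or.inr ⟨m + 1, by omega, hb⟩
  · rintro (rfl | ha)
    · exact parent_anc hp
    · obtain ⟨k, hk, hkit⟩ := ha
      exact ⟨k + 1, by omega, by simp [parIter, hp, hkit]⟩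

lemma no_anc_of_none {par : Fin N → Option (Fin N)} {i : Fin N} (hp : par i = none)
    (a : Fin N) : ¬ IsAncestor par a i := by
  rintro ⟨k, hk, hiter⟩
  obtain ⟨m, rfl⟩ : ∃ m, k = m + 1 := ⟨k - 1, by omega⟩
  simp [parIter, hp] at hiter

/-- chain of i: i together with its ancestors -/
def ancChain (par : Fin N → Option (Fin N)) (i : Fin N) : Set (Fin N) :=
  {a | a = i ∨ IsAncestor par a i}

lemma self_mem_ancChain (par : Fin N → Option (Fin N)) (i : Fin N) :
    i ∈ ancChain par i := Or.inl rfl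

lemma ancChain_mono (par : Fin N → Option (Fin N)) {a i : Fin N}
    (h : a ∈ ancChain par i) : ancChain par a ⊆ ancChain par i := by
  rintro b (rfl | hba)
  · exact h
  · rcases h with rfl | hai
    · exact Or.inr hba
    · exact Or.inr (isAncestor_trans hba hai)

lemma ancChain_antisymm {par : Fin N → Option (Fin N)} (h : WFParent par) {a i : Fin N}
    (h1 : a ∈ ancChain par i) (h2 : i ∈ ancChain par a) : a = i := by
  rcases h1 with rfl | h1
  · rfl
  · rcases h2 with rfl | h2
    · rfl
    · exact absurd (isAncestor_trans h1 h2) (not_isAncestor_self h a)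

end AuxLemmas

/-- The map sending a heterogeneous out-tree to its heterogeneous
dependency matrix is injective. -/
theorem depMatrix_injective {N : ℕ} (par₁ par₂ : Fin N → Option (Fin N))
    (σ₁ σ₂ : Equiv.Perm (Fin N)) (h₁ : WFParent par₁) (h₂ : WFParent par₂)
    (hD : depMatrix par₁ σ₁ = depMatrix par₂ σ₂) :
    par₁ = par₂ ∧ σ₁ = σ₂ := by
  classical
  have H : ∀ i a : Fin N, (a = i ∨ IsAncestor par₁ a i) ↔
      (σ₂.symm (σ₁ a) = i ∨ IsAncestor par₂ (σ₂.symm (σ₁ a)) i) := by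
    intro i a
    have := congrFun (congrFun hD i) (σ₁ a)
    simp only [depMatrix, Equiv.symm_apply_apply, decide_eq_decide] at this
    exact this
  set π : Equiv.Perm (Fin N) := σ₁.trans σ₂.symm with hπ
  have hπa : ∀ a, π a = σ₂.symm (σ₁ a) := fun a => rfl
  have Hmem : ∀ i a : Fin N, a ∈ ancChain par₁ i ↔ π a ∈ ancChain par₂ i := by
    intro i a; rw [hπa]; exact H i a
  have hchain2 : ∀ i : Fin N, ancChain par₂ i = π '' ancChain par₁ i := by
    intro i
    ext b
    constructor
    · intro hb
      exact ⟨π.symm b, (Hmem i (π.symm b)).mpr (by simpa using hb), by simp⟩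
    · rintro ⟨a, ha, rfl⟩
      exact (Hmem i a).mp ha
  have hcard : ∀ i : Fin N, (ancChain par₂ i).ncard = (ancChain par₁ i).ncard := by
    intro i
    rw [hchain2, Set.ncard_image_of_injective _ π.injective]
  have hfix : ∀ i, π i = i := by
    intro i
    by_contra hne
    have h1 : π i ∈ ancChain par₂ i := (Hmem i i).mp (self_mem_ancChain _ _)
    have h2 : i ∈ ancChain par₁ (π i) := by
      have : π i ∈ ancChain par₂ (π i) := self_mem_ancChain _ _
      exact (Hmem (π i) i).mpr this
    have hsub2 : ancChain par₂ (π i) ⊆ ancChain par₂ i := ancChain_mono _ h1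
    have hnmem : i ∉ ancChain par₂ (π i) := fun hin =>
      hne (ancChain_antisymm h₂ h1 hin)
    have hss : ancChain par₂ (π i) ⊂ ancChain par₂ i :=
      ⟨hsub2, fun hsup => hnmem (hsup (self_mem_ancChain _ _))⟩
    have hlt : (ancChain par₂ (π i)).ncard < (ancChain par₂ i).ncard :=
      Set.ncard_lt_ncard hss (Set.toFinite _)
    have hle : (ancChain par₁ i).ncard ≤ (ancChain par₁ (π i)).ncard :=
      Set.ncard_le_ncard (ancChain_mono _ h2) (Set.toFinite _)
    rw [hcard, hcard] at hlt
    omega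
  have hσ : σ₁ = σ₂ := by
    apply Equiv.ext
    intro i
    have h := (hπa i).symm.trans (hfix i)
    have := congrArg σ₂ h
    simpa using this
  have Hanc : ∀ i a : Fin N, IsAncestor par₁ a i ↔ IsAncestor par₂ a i := by
    intro i a
    have h := H i a
    have hfa := (hπa a).symm.trans (hfix a)
    rw [hfa] at h
    by_cases hai : a = i
    · subst hai
      exact iff_of_false (not_isAncestor_self h₁ a) (not_isAncestor_self h₂ a)
    · constructor
      · intro h'
        rcases h.mp (Or.inr h') with h'' | h''
        · exact absurd h'' hai
        · exact h''
      · intro h'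
        rcases h.mpr (Or.inr h') with h'' | h''
        · exact absurd h'' hai
        · exact h''
  refine ⟨funext fun i => ?_, hσ⟩
  cases hp1 : par₁ i with
  | none =>
      cases hp2 : par₂ i with
      | none => rfl
      | some q =>
          exact absurd ((Hanc i q).mpr (parent_anc hp2)) (no_anc_of_none hp1 q)
  | some p =>
      cases hp2 : par₂ i with
      | none =>
          exact absurd ((Hanc i p).mp (parent_anc hp1)) (no_anc_of_none hp2 p)
      | some q =>
          by_contra hne
          have hpq : p ≠ q := fun h => hne (by rw [h])
          have hp2anc : IsAncestor par₂ p i := (Hanc i p).mp (parent_anc hp1)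
          have hq1anc : IsAncestor par₁ q i := (Hanc i q).mpr (parent_anc hp2)
          rcases (anc_iff_of_parent hp2 p).mp hp2anc with h | hpq2
          · exact hpq h
          rcases (anc_iff_of_parent hp1 q).mp hq1anc with h | hqp1
          · exact hpq h.symm
          have hqp2 : IsAncestor par₂ q p := (Hanc p q).mp hqp1
          exact not_isAncestor_self h₂ p (isAncestor_trans hpq2 hqp2)
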